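/- Let H be the Heisenberg group (S¹ × ℝ², with multiplication (α,u)(β,v) = (α+β+½ω̄(u,v), u+v), universal cover ℝ × ℝ² with ω in place of ω̄, where ω is the standard symplectic form on ℝ²). For a nonzero linear map σ : ℝ² → ℝ, the integrated cocycle on the universal cover is Θ(α,u) = (σ(u), −ασ − ½σ(u)ι_uω) ∈ 𝔤* ≅ ℝ* × (ℝ²)*, and the Hamiltonian holonomy Θ(ℤ × {0}) = {0} × ℤσ is a closed (discrete) subgroup of 𝔤*. -/

import Mathlib

/-- The standard symplectic form on `ℝ²`. -/
def omega2 (u v : ℝ × ℝ) : ℝ := u.1 * v.2 - u.2 * v.1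

/-- for the Heisenberg group `H̃ = ℝ × ℝ²` (multiplication
`(α,u)(β,v) = (α+β+½ω(u,v), u+v)`, universal cover of the central extension
`G = S¹ × ℝ²`), with the Lie algebra cocycle `θ(a,v) = (σv, −aσ)` determined by a
nonzero `σ : ℝ² → ℝ`, the integrated cocycle
`Θ(g̃) = ∫₀¹ Ad*_{g(t)⁻¹} θ(g(t)⁻¹ġ(t)) dt` (whose integrand, computed in these
coordinates for `g(t) = (a(t),w(t))`, has first component `σ(ẇ)` and second component
`−(ȧ − ½ω(w,ẇ))σ − σ(ẇ)ι_wω`) satisfies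
`Θ(α,u) = (σ(u), −ασ − ½σ(u) ι_uω)` for any `C¹` path `g` from the identity to `(α,u)`;
moreover the Hamiltonian holonomy `Θ(ℤ × {0}) = {0} × ℤσ` is a closed (discrete)
subgroup of `𝔤* ≅ ℝ × (ℝ²)*`. -/
theorem stmt18 (σ : (ℝ × ℝ) →L[ℝ] ℝ) (hσ : σ ≠ 0) :
    (∀ (α : ℝ) (u : ℝ × ℝ) (g : ℝ → ℝ × (ℝ × ℝ)),
      ContDiff ℝ 1 g → g 0 = 0 → g 1 = (α, u) →
      ((∫ t in (0:ℝ)..1, σ (deriv (fun τ => (g τ).2) t)) = σ u ∧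
       ∀ v : ℝ × ℝ,
        (∫ t in (0:ℝ)..1,
          (-(deriv (fun τ => (g τ).1) t
              - (1/2) * omega2 ((g t).2) (deriv (fun τ => (g τ).2) t)) * σ v
            - σ (deriv (fun τ => (g τ).2) t) * omega2 ((g t).2) v))
          = -α * σ v - (1/2) * σ u * omega2 u v))
    ∧
    IsClosed {μ : ℝ × ((ℝ × ℝ) →L[ℝ] ℝ) | ∃ n : ℤ, μ = (0, -(n : ℝ) • σ)} := by
  have hσx : ∀ x : ℝ × ℝ, σ x = x.1 * σ (1, 0) + x.2 * σ (0, 1) := by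
    intro x
    have hx : x = x.1 • ((1:ℝ), (0:ℝ)) + x.2 • ((0:ℝ), (1:ℝ)) := by
      ext <;> simp
    conv_lhs => rw [hx]
    rw [map_add, map_smul, map_smul, smul_eq_mul, smul_eq_mul]
  constructor
  · intro α u g hg h0 h1
    have hdg : Differentiable ℝ g := hg.differentiable one_ne_zero
    have hcd : Continuous (deriv g) := hg.continuous_deriv le_rfl
    have hga : ∀ t, HasDerivAt (fun τ => (g τ).1) (deriv g t).1 t :=
      fun t => ((hdg t).hasDerivAt).fst
    have hgw : ∀ t, HasDerivAt (fun τ => (g τ).2) (deriv g t).2 t :=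
      fun t => ((hdg t).hasDerivAt).snd
    have hda : deriv (fun τ => (g τ).1) = fun t => (deriv g t).1 :=
      funext fun t => (hga t).deriv
    have hdw : deriv (fun τ => (g τ).2) = fun t => (deriv g t).2 :=
      funext fun t => (hgw t).deriv
    constructor
    · rw [hdw]
      have key : ∀ t ∈ Set.uIcc (0:ℝ) 1,
          HasDerivAt (fun τ => σ (g τ).2) (σ (deriv g t).2) t :=
        fun t _ => σ.hasFDerivAt.comp_hasDerivAt t (hgw t)
      rw [intervalIntegral.integral_eq_sub_of_hasDerivAt key
        (((σ.continuous.comp (hcd.snd)).intervalIntegrable 0 1))]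
      simp [h0, h1]
    · intro v
      rw [hda, hdw]
      set E : ℝ → ℝ := fun t =>
        -((deriv g t).1 - 1 / 2 * omega2 (g t).2 (deriv g t).2) * σ v -
          σ (deriv g t).2 * omega2 (g t).2 v with hE
      set F : ℝ → ℝ := fun t =>
        -(g t).1 * σ v - 1 / 2 * σ (g t).2 * omega2 ((g t).2) v with hF
      have key : ∀ t ∈ Set.uIcc (0:ℝ) 1, HasDerivAt F (E t) t := by
        intro t _
        have hσw : HasDerivAt (fun τ => σ (g τ).2) (σ (deriv g t).2) t :=
          σ.hasFDerivAt.comp_hasDerivAt t (hgw t)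
        have hw1 : HasDerivAt (fun τ => (g τ).2.1) (deriv g t).2.1 t := (hgw t).fst
        have hw2 : HasDerivAt (fun τ => (g τ).2.2) (deriv g t).2.2 t := (hgw t).snd
        have hD : HasDerivAt F
            (-(deriv g t).1 * σ v -
              ((1 / 2 * σ (deriv g t).2) * ((g t).2.1 * v.2 - (g t).2.2 * v.1) +
               (1 / 2 * σ (g t).2) * ((deriv g t).2.1 * v.2 - (deriv g t).2.2 * v.1))) t := by
          have h1 : HasDerivAt (fun τ => -(g τ).1 * σ v) (-(deriv g t).1 * σ v) t :=
            (hga t).neg.mul_const _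
          have h2 : HasDerivAt (fun τ => 1 / 2 * σ (g τ).2) (1 / 2 * σ (deriv g t).2) t :=
            hσw.const_mul _
          have h3 : HasDerivAt (fun τ => (g τ).2.1 * v.2 - (g τ).2.2 * v.1)
              ((deriv g t).2.1 * v.2 - (deriv g t).2.2 * v.1) t :=
            (hw1.mul_const _).sub (hw2.mul_const _)
          have := h1.sub (h2.mul h3)
          simpa [hF, omega2, mul_comm, Pi.sub_def, Pi.mul_def] using this
        convert hD using 1
        rw [hE]
        simp only [omega2, hσx (deriv g t).2, hσx (g t).2, hσx v]
        ring
      have hcE : Continuous E := by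
        rw [hE]
        simp only [omega2]
        fun_prop
      rw [intervalIntegral.integral_eq_sub_of_hasDerivAt key (hcE.intervalIntegrable 0 1)]
      simp only [hF, h0, h1]
      simp [omega2]
  · have hL : Topology.IsClosedEmbedding (fun r : ℝ =>
        ((0 : ℝ), -r • σ) : ℝ → ℝ × ((ℝ × ℝ) →L[ℝ] ℝ)) := by
      have : Topology.IsClosedEmbedding (fun r : ℝ => r • ((0:ℝ), -σ) :
          ℝ → ℝ × ((ℝ × ℝ) →L[ℝ] ℝ)) := by
        exact isClosedEmbedding_smul_left (by simp [Prod.ext_iff, hσ] :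
          ((0:ℝ), -σ) ≠ (0 : ℝ × ((ℝ × ℝ) →L[ℝ] ℝ)))
      convert this using 2 with r
      ext <;> simp [neg_smul]
    have hset : {μ : ℝ × ((ℝ × ℝ) →L[ℝ] ℝ) | ∃ n : ℤ, μ = (0, -(n : ℝ) • σ)} =
        (fun r : ℝ => ((0 : ℝ), -r • σ)) '' (Set.range ((↑) : ℤ → ℝ)) := by
      ext μ
      simp only [Set.mem_setOf_eq, Set.mem_image, Set.mem_range]
      constructor
      · rintro ⟨n, rfl⟩; exact ⟨n, ⟨n, rfl⟩, rfl⟩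
      · rintro ⟨r, ⟨n, rfl⟩, rfl⟩; exact ⟨n, rfl⟩
    rw [hset]
    exact hL.isClosedMap _ Int.isClosedEmbedding_coe_real.isClosed_range
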